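/- Let m ≥ 2 be even. Then for every g ≥ m there exists a numerical semigroup S with concentration 2, multiplicity m, and genus g. -/
import Mathlib


open Set

/-- A numerical semigroup: contains 0, closed under addition, finite complement. -/
def IsNumSgp (S : Set ℕ) : Prop :=
  0 ∈ S ∧ (∀ a ∈ S, ∀ b ∈ S, a + b ∈ S) ∧ (Sᶜ : Set ℕ).Finite

/-- The multiplicity: least positive element. -/
noncomputable def mult (S : Set ℕ) : ℕ := sInf {n | n ∈ S ∧ n ≠ 0}

/-- next_S(s) = min { x ∈ S | s < x }. -/
noncomputable def nextS (S : Set ℕ) (s : ℕ) : ℕ := sInf {x | x ∈ S ∧ s < x}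

/-- The concentration C(S) = max { next_S(s) - s | s ∈ S \ {0} }. -/
noncomputable def conc (S : Set ℕ) : ℕ :=
  sSup {d | ∃ s ∈ S, s ≠ 0 ∧ d = nextS S s - s}

/-- The Frobenius number: largest gap. -/
noncomputable def frob (S : Set ℕ) : ℕ := sSup (Sᶜ : Set ℕ)

/-- The genus: number of gaps. -/
noncomputable def genus (S : Set ℕ) : ℕ := (Sᶜ : Set ℕ).ncard

/-- x is a minimal generator of S. -/
def IsMinGen (S : Set ℕ) (x : ℕ) : Prop :=
  x ∈ S ∧ x ≠ 0 ∧ ¬∃ a ∈ S, ∃ b ∈ S, a ≠ 0 ∧ b ≠ 0 ∧ a + b = x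

/-- The embedding dimension: number of minimal generators. -/
noncomputable def edim (S : Set ℕ) : ℕ := {x | IsMinGen S x}.ncard

/-- n(S): the number of elements of S smaller than the Frobenius number. -/
noncomputable def nS (S : Set ℕ) : ℕ := {s | s ∈ S ∧ s < frob S}.ncard

/-- The half-line Δ(m) = {0} ∪ {m, m+1, ...}. -/
def Delta (m : ℕ) : Set ℕ := {0} ∪ {n | m ≤ n}

def IsHalfLine (S : Set ℕ) : Prop := ∃ m, S = Delta m

/-- An irreducible numerical semigroup. -/
def Irred (S : Set ℕ) : Prop :=
  ¬∃ T₁ T₂ : Set ℕ, IsNumSgp T₁ ∧ IsNumSgp T₂ ∧ S ⊂ T₁ ∧ S ⊂ T₂ ∧ S = T₁ ∩ T₂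

theorem stmt12 (m : ℕ) (hm : 2 ≤ m) (hev : Even m) :
    ∀ g : ℕ, m ≤ g → ∃ S : Set ℕ, IsNumSgp S ∧ conc S = 2 ∧ mult S = m ∧
      genus S = g := by
  intro g hg
  have hm2 : m % 2 = 0 := Nat.even_iff.mp hev
  set r : ℕ := g - m + 1 with hr
  set c : ℕ := m + 2 * r with hc
  set S : Set ℕ := {0} ∪ {n | m ≤ n ∧ n % 2 = 0} ∪ {n | c ≤ n} with hS
  have hmem : ∀ n, n ∈ S ↔ n = 0 ∨ (m ≤ n ∧ n % 2 = 0) ∨ c ≤ n := by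
    intro n
    simp only [hS, Set.mem_union, Set.mem_singleton_iff, Set.mem_setOf_eq]
    tauto
  have hmS : m ∈ S := (hmem m).mpr (Or.inr (Or.inl ⟨le_refl m, hm2⟩))
  -- nextS S m = m + 2
  have hnext : nextS S m = m + 2 := by
    apply le_antisymm
    · exact Nat.sInf_le ⟨(hmem _).mpr (Or.inr (Or.inl ⟨by omega, by omega⟩)), by omega⟩
    · have hne : {x | x ∈ S ∧ m < x}.Nonempty :=
        ⟨m + 2, (hmem _).mpr (Or.inr (Or.inl ⟨by omega, by omega⟩)), by omega⟩
      have := Nat.sInf_mem hne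
      obtain ⟨hx, hlt⟩ := this
      rw [hmem] at hx
      show m + 2 ≤ sInf {x | x ∈ S ∧ m < x}
      omega
  refine ⟨S, ⟨(hmem 0).mpr (Or.inl rfl), ?_, ?_⟩, ?_, ?_, ?_⟩
  · -- closure
    intro a ha b hb
    rw [hmem] at ha hb ⊢
    omega
  · -- finite complement
    apply (Set.finite_Iio c).subset
    intro n hn
    simp only [Set.mem_compl_iff, hmem] at hn
    simp only [Set.mem_Iio]
    omega
  · -- conc = 2
    have h2 : 2 ∈ {d | ∃ s ∈ S, s ≠ 0 ∧ d = nextS S s - s} :=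
      ⟨m, hmS, by omega, by rw [hnext]; omega⟩
    have hbd : ∀ d ∈ {d | ∃ s ∈ S, s ≠ 0 ∧ d = nextS S s - s}, d ≤ 2 := by
      rintro d ⟨s, hs, hs0, rfl⟩
      have hle : nextS S s ≤ s + 2 := by
        rw [hmem] at hs
        rcases hs with h | h | h
        · omega
        · exact Nat.sInf_le ⟨(hmem _).mpr (Or.inr (Or.inl ⟨by omega, by omega⟩)), by omega⟩
        · have h1 : nextS S s ≤ s + 1 :=
            Nat.sInf_le ⟨(hmem _).mpr (Or.inr (Or.inr (by omega))), by omega⟩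
          omega
      omega
    exact le_antisymm (csSup_le ⟨2, h2⟩ hbd) (le_csSup ⟨2, hbd⟩ h2)
  · -- mult = m
    apply le_antisymm
    · exact Nat.sInf_le ⟨hmS, by omega⟩
    · have hne : {n | n ∈ S ∧ n ≠ 0}.Nonempty := ⟨m, hmS, by omega⟩
      have := Nat.sInf_mem hne
      obtain ⟨hx, hx0⟩ := this
      rw [hmem] at hx
      show m ≤ sInf {n | n ∈ S ∧ n ≠ 0}
      omega
  · -- genus = g
    have hcompl : Sᶜ = ↑(Finset.Ioo 0 m ∪ (Finset.Ioo m c).filter (fun n => n % 2 = 1)) := by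
      ext n
      simp only [Set.mem_compl_iff, hmem, Finset.coe_union, Set.mem_union, Finset.coe_filter,
        Finset.mem_coe, Finset.mem_Ioo, Set.mem_setOf_eq]
      omega
    have hdisj : Disjoint (Finset.Ioo 0 m) ((Finset.Ioo m c).filter (fun n => n % 2 = 1)) := by
      rw [Finset.disjoint_left]
      intro n h1 h2
      simp only [Finset.mem_Ioo] at h1
      simp only [Finset.mem_filter, Finset.mem_Ioo] at h2
      omega
    have himg : (Finset.Ioo m c).filter (fun n => n % 2 = 1)
        = (Finset.range r).image (fun i => m + 1 + 2 * i) := by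
      ext n
      simp only [Finset.mem_filter, Finset.mem_Ioo, Finset.mem_image, Finset.mem_range]
      constructor
      · intro h
        exact ⟨(n - m - 1) / 2, by omega, by omega⟩
      · rintro ⟨i, hi, rfl⟩
        omega
    have hinj : Function.Injective (fun i : ℕ => m + 1 + 2 * i) := by
      intro a b h
      simp only at h
      omega
    rw [genus, hcompl, Set.ncard_coe_finset, Finset.card_union_of_disjoint hdisj,
      Nat.card_Ioo, himg, Finset.card_image_of_injective _ hinj, Finset.card_range]
    omega
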